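/- Let G be a group, ρ : G → U(1) a group homomorphism, and r a positive integer. The well-defined map from conjugacy classes of G̃_{ρ,r} to conjugacy classes of G, induced by pr₁ (sending the class of (g,ξ) to the class of g), has every fiber of cardinality exactly r; that is, every conjugacy class of G has exactly r liftings to conjugacy classes of G̃_{ρ,r}. -/

import Mathlib

noncomputable section

/-- The fiber-product group `G̃_{ρ,r} = {(g,ξ) ∈ G × U(1) | ρ(g) = ξ^r}`,
realized as a subgroup of `G × Circle`. -/
def rootFiberSubgroup {G : Type*} [Group G] (ρ : G →* Circle) (r : ℕ) :
    Subgroup (G × Circle) where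
  carrier := {p : G × Circle | ρ p.1 = p.2 ^ r}
  one_mem' := by simp
  mul_mem' := by
    intro a b ha hb
    simp only [Set.mem_setOf_eq, Prod.fst_mul, Prod.snd_mul, map_mul, mul_pow] at *
    rw [ha, hb]
  inv_mem' := by
    intro a ha
    simp only [Set.mem_setOf_eq, Prod.fst_inv, Prod.snd_inv, map_inv, inv_pow] at *
    rw [ha]

/-- The subgroup `μ_r ⊆ U(1)` of `r`-th roots of unity. -/
def circleRootsOfUnity (r : ℕ) : Subgroup Circle where
  carrier := {ξ : Circle | ξ ^ r = 1}
  one_mem' := by simp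
  mul_mem' := by
    intro a b ha hb
    simp only [Set.mem_setOf_eq, mul_pow] at *
    rw [ha, hb, mul_one]
  inv_mem' := by
    intro a ha
    simp only [Set.mem_setOf_eq, inv_pow] at *
    rw [ha, inv_one]

-- Auxiliary lemmas
lemma circle_exp_nsmul (t : ℝ) (n : ℕ) : Circle.exp (n * t) = (Circle.exp t) ^ n := by
  induction n with
  | zero => simp
  | succ m ih =>
    push_cast
    rw [add_mul, one_mul, Circle.exp_add, ih, pow_succ]

lemma circle_exists_root (r : ℕ) (hr : 0 < r) (w : Circle) : ∃ ξ : Circle, ξ ^ r = w := by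
  refine ⟨Circle.exp (Complex.arg w / r), ?_⟩
  rw [← circle_exp_nsmul, mul_div_cancel₀, Circle.exp_arg]
  exact_mod_cast hr.ne'

open Polynomial in
lemma circle_card_roots (r : ℕ) (hr : 0 < r) (w : Circle) :
    Nat.card {ξ : Circle // ξ ^ r = w} = r := by
  obtain ⟨ξ₀, hξ₀⟩ := circle_exists_root r hr w
  have e1 : {ξ : Circle // ξ ^ r = w} ≃ {ξ : Circle // ξ ^ r = 1} :=
    { toFun := fun ξ => ⟨ξ.1 * ξ₀⁻¹, by
        rw [mul_pow, ξ.2, inv_pow, hξ₀, mul_inv_cancel]⟩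
      invFun := fun ξ => ⟨ξ.1 * ξ₀, by rw [mul_pow, ξ.2, one_mul, hξ₀]⟩
      left_inv := fun ξ => by simp
      right_inv := fun ξ => by simp }
  have e2 : {ξ : Circle // ξ ^ r = 1} ≃ {z : ℂ // z ∈ nthRootsFinset r (1 : ℂ)} :=
    { toFun := fun ξ => ⟨(ξ.1 : ℂ), by
        rw [mem_nthRootsFinset hr, ← Circle.coe_pow, ξ.2, Circle.coe_one]⟩
      invFun := fun z => ⟨⟨z.1, by
          show z.1 ∈ Metric.sphere (0:ℂ) 1
          rw [mem_sphere_zero_iff_norm]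
          have h1 : z.1 ^ r = 1 := (mem_nthRootsFinset hr 1).1 z.2
          have h2 : ‖z.1‖ ^ r = 1 ^ r := by rw [← norm_pow, h1, norm_one, one_pow]
          exact (pow_left_inj₀ (norm_nonneg _) zero_le_one hr.ne').1 h2⟩, by
        ext
        push_cast
        exact (mem_nthRootsFinset hr 1).1 z.2⟩
      left_inv := fun ξ => by ext; rfl
      right_inv := fun z => rfl }
  rw [Nat.card_congr (e1.trans e2), Nat.card_eq_finsetCard,
    (Complex.isPrimitiveRoot_exp r hr.ne').card_nthRootsFinset]

/-- The first projection `pr₁ : G̃_{ρ,r} → G`, as a group homomorphism. -/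
def rootFiberPr1 {G : Type*} [Group G] (ρ : G →* Circle) (r : ℕ) :
    rootFiberSubgroup ρ r →* G :=
  (MonoidHom.fst G Circle).comp (rootFiberSubgroup ρ r).subtype


/-- the well-defined map from conjugacy classes of `G̃_{ρ,r}` to conjugacy
classes of `G` induced by `pr₁` (sending the class of `(g,ξ)` to the class of `g`) has every
fiber of cardinality exactly `r`: every conjugacy class of `G` has exactly `r` liftings. -/
theorem root_fiber_conjClasses_fiber_card
    {G : Type*} [Group G] (ρ : G →* Circle) (r : ℕ) (hr : 0 < r) :
    (∀ x : rootFiberSubgroup ρ r,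
      ConjClasses.map (rootFiberPr1 ρ r) (ConjClasses.mk x) =
        ConjClasses.mk ((x : G × Circle).1)) ∧
    ∀ c : ConjClasses G,
      Nat.card {c' : ConjClasses (rootFiberSubgroup ρ r) //
        ConjClasses.map (rootFiberPr1 ρ r) c' = c} = r := by
  have hmap : ∀ x : rootFiberSubgroup ρ r,
      ConjClasses.map (rootFiberPr1 ρ r) (ConjClasses.mk x) =
        ConjClasses.mk ((x : G × Circle).1) := fun x => rfl
  refine ⟨hmap, fun c => ?_⟩
  obtain ⟨g, rfl⟩ := ConjClasses.exists_rep c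
  -- the map from roots to the fiber
  have mem : ∀ ξ : {ξ : Circle // ξ ^ r = ρ g}, ((g, ξ.1) : G × Circle) ∈ rootFiberSubgroup ρ r :=
    fun ξ => ξ.2.symm
  set f : {ξ : Circle // ξ ^ r = ρ g} →
      {c' : ConjClasses (rootFiberSubgroup ρ r) //
        ConjClasses.map (rootFiberPr1 ρ r) c' = ConjClasses.mk g} :=
    fun ξ => ⟨ConjClasses.mk ⟨(g, ξ.1), mem ξ⟩, rfl⟩ with hf
  have hbij : Function.Bijective f := by
    constructor
    · rintro ⟨ξ, hξ⟩ ⟨ξ', hξ'⟩ h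
      have h2 : ConjClasses.mk (⟨(g, ξ), mem ⟨ξ, hξ⟩⟩ : rootFiberSubgroup ρ r) =
          ConjClasses.mk ⟨(g, ξ'), mem ⟨ξ', hξ'⟩⟩ := congrArg Subtype.val h
      rw [ConjClasses.mk_eq_mk_iff_isConj, isConj_iff] at h2
      obtain ⟨t, ht⟩ := h2
      have := congrArg (fun x : rootFiberSubgroup ρ r => (x : G × Circle).2) ht
      simp only [Subgroup.coe_mul, Prod.snd_mul, Subgroup.coe_inv, Prod.snd_inv] at this
      exact Subtype.ext (by show ξ = ξ'; rw [← this, mul_comm, ← mul_assoc, inv_mul_cancel, one_mul])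
    · rintro ⟨c', hc'⟩
      obtain ⟨y, rfl⟩ := ConjClasses.exists_rep c'
      rw [hmap, ConjClasses.mk_eq_mk_iff_isConj, isConj_iff] at hc'
      obtain ⟨h, hh⟩ := hc'
      obtain ⟨η, hη⟩ := circle_exists_root r hr (ρ h)
      have hξ' : ((y : G × Circle).2) ^ r = ρ g := by
        rw [← hh, map_mul, map_mul, map_inv, mul_comm, ← mul_assoc, inv_mul_cancel, one_mul,
          y.2.symm]
      refine ⟨⟨(y : G × Circle).2, hξ'⟩, ?_⟩
      apply Subtype.ext
      show ConjClasses.mk _ = ConjClasses.mk y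
      rw [ConjClasses.mk_eq_mk_iff_isConj]
      apply IsConj.symm
      rw [isConj_iff]
      refine ⟨⟨(h, η), hη.symm⟩, ?_⟩
      apply Subtype.ext
      apply Prod.ext
      · exact hh
      · show η * (y : G × Circle).2 * η⁻¹ = (y : G × Circle).2
        rw [mul_comm, ← mul_assoc, inv_mul_cancel, one_mul]
  rw [← Nat.card_eq_of_bijective f hbij, circle_card_roots r hr (ρ g)]
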